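/- Let ρ₁ be an infinite cardinal and ρ₃, ρ₄ be cardinals with ρ₁⁺ ≥ ρ₁, ω ≤ ρ₃ ≤ ρ₁⁺ and 2 ≤ ρ₄ ≤ ρ₃. If either cf(ρ₁) < ρ₄ or cf(ρ₁) ≥ ρ₃, then cov(ρ₁, ρ₁, ρ₃, ρ₄) = cf(ρ₁). -/

import Mathlib

open Cardinal

noncomputable section

/-- The covering number `cov(ρ₁, ρ₂, ρ₃, ρ₄)`: least cardinality of `X ⊆ P_{ρ₂}(ρ₁)`
such that every `b ∈ P_{ρ₃}(ρ₁)` is covered by the union of fewer than `ρ₄` members of `X`. -/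
def cov (r1 r2 r3 r4 : Cardinal) : Cardinal :=
  sInf { c | ∃ X : Set (Set r1.out),
    (∀ x ∈ X, #x < r2) ∧
    (∀ b : Set r1.out, #b < r3 → ∃ Q : Set (Set r1.out), Q ⊆ X ∧ #Q < r4 ∧ b ⊆ ⋃₀ Q) ∧
    #X = c }

/-- The meeting number `m(ρ, λ)`. -/
def meet (ρ lam : Cardinal) : Cardinal :=
  sInf { c | ∃ Q : Set (Set lam.out),
    (∀ q ∈ Q, #q = ρ) ∧
    (∀ b : Set lam.out, #b = ρ → ∃ q ∈ Q, #(↥(b ∩ q)) = ρ) ∧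
    #Q = c }

/-- The density number `d(ρ, λ)`. -/
def dens (ρ lam : Cardinal) : Cardinal :=
  sInf { c | ∃ Q : Set (Set lam.out),
    (∀ q ∈ Q, #q = ρ) ∧
    (∀ b : Set lam.out, #b = ρ → ∃ q ∈ Q, q ⊆ b) ∧
    #Q = c }

/-- `ds(f)` for `f : λ → ρ`. -/
def ds (ρ lam : Cardinal) (f : lam.out → ρ.out) : Cardinal :=
  sInf { c | ∃ Z : Set (Set lam.out),
    (∀ z ∈ Z, #z = ρ) ∧
    (∀ B : Set lam.out, (∀ α : ρ.out, #(↥(B ∩ f ⁻¹' {α})) = lam) →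
      ∃ z ∈ Z, #(↥(f '' (z ∩ B))) = ρ) ∧
    #Z = c }

/-- The Džamonja–Shelah number `DS(ρ, λ) = sup { ds(f) : f : λ → ρ }`. -/
def DS (ρ lam : Cardinal) : Cardinal := ⨆ f : lam.out → ρ.out, ds ρ lam f

/-- Cofinality of a cardinal. -/
def cf (c : Cardinal) : Cardinal := c.ord.cof

/-- `u(σ, λ) = cov(λ, σ, σ, ω)`. -/
def u (σ lam : Cardinal) : Cardinal := cov lam σ σ ℵ₀

/-- The `o`-th iterated cardinal successor of `c`. -/
def succIter (c : Cardinal) (o : Ordinal) : Cardinal :=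
  Cardinal.preAleph (Cardinal.preAleph.symm c + o)


theorem stmt7 (r1 r3 r4 : Cardinal) (h1 : ℵ₀ ≤ r1)
    (h3 : ℵ₀ ≤ r3) (h3' : r3 ≤ Order.succ r1) (h4 : 2 ≤ r4) (h43 : r4 ≤ r3)
    (h : cf r1 < r4 ∨ r3 ≤ cf r1) :
    cov r1 r1 r3 r4 = cf r1 := by
  have hmk : #r1.out = r1 := mk_out r1
  obtain ⟨r, wo, hr⟩ := Cardinal.ord_eq r1.out
  haveI := wo
  rw [hmk] at hr
  have hcfr : Ordinal.cof (Ordinal.type r) = cf r1 := by rw [← hr]; rfl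
  obtain ⟨S, hSunb, hScard⟩ : ∃ S : Set r1.out, (∀ a, ∃ b ∈ S, ¬ r b a) ∧
      #S = Ordinal.cof (Ordinal.type r) := by
    letI := IsWellOrder.linearOrder r
    haveI : WellFoundedLT r1.out := ⟨wo.wf⟩
    have ht : Ordinal.type r = Ordinal.type (α := r1.out) (· < ·) := rfl
    obtain ⟨S, hS, hS'⟩ := Order.exists_cof_eq (α := r1.out)
    refine ⟨S, fun a => ?_, by rw [hS', ht, Ordinal.cof_type]⟩
    obtain ⟨b, hb, hab⟩ := hS a
    exact ⟨b, hb, not_lt_of_ge hab⟩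
  rw [hcfr] at hScard
  -- the "Iic" sets
  set I : r1.out → Set r1.out := fun a => {y | r y a ∨ y = a} with hI
  set X : Set (Set r1.out) := I '' S with hX
  have hXsmall : ∀ x ∈ X, #x < r1 := by
    rintro _ ⟨a, _, rfl⟩
    have hsub : I a ⊆ insert a {y | r y a} := by
      intro y hy
      rcases hy with h' | h'
      · exact Set.mem_insert_of_mem _ h'
      · exact h' ▸ Set.mem_insert _ _
    calc #(I a) ≤ #(insert a {y | r y a} : Set _) := Cardinal.mk_le_mk_of_subset hsub
      _ ≤ #({y | r y a} : Set _) + 1 := Cardinal.mk_insert_le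
      _ < r1 := by
          refine Cardinal.add_lt_of_lt h1 ?_ (lt_of_lt_of_le Cardinal.one_lt_aleph0 h1)
          have := Cardinal.card_typein_lt (r := r) a (by rw [hmk, hr])
          rw [Ordinal.card_typein, hmk] at this; exact this
  have hmem : ∀ a x, ¬ r a x → x ∈ I a := by
    intro a x hax
    rcases trichotomous_of r x a with h' | h' | h'
    · exact Or.inl h'
    · exact Or.inr h'
    · exact absurd h' hax
  have hXcov : ∀ b : Set r1.out, #b < r3 →
      ∃ Q : Set (Set r1.out), Q ⊆ X ∧ #Q < r4 ∧ b ⊆ ⋃₀ Q := by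
    intro b hb
    rcases h with hcf | hcf
    · refine ⟨X, subset_rfl, ?_, ?_⟩
      · calc #X ≤ #S := Cardinal.mk_image_le
          _ = cf r1 := hScard
          _ < r4 := hcf
      · intro x _
        obtain ⟨a, haS, ha⟩ := hSunb x
        exact ⟨I a, ⟨a, haS, rfl⟩, hmem a x ha⟩
    · have hbb : #b < Ordinal.cof (Ordinal.type r) := by
        rw [hcfr]
        exact lt_of_lt_of_le hb hcf
      obtain ⟨a, ha⟩ : ∃ a, ∀ x ∈ b, r x a := by
        letI := IsWellOrder.linearOrder r
        haveI : WellFoundedLT r1.out := ⟨wo.wf⟩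
        have ht : Ordinal.type r = Ordinal.type (α := r1.out) (· < ·) := rfl
        rw [ht, Ordinal.cof_type] at hbb
        have hnc : ¬ IsCofinal b := fun hc => not_le_of_gt hbb (Order.cof_le hc)
        simp only [IsCofinal, not_forall, not_exists, not_and, not_le] at hnc
        exact hnc
      obtain ⟨a', ha'S, ha'⟩ := hSunb a
      refine ⟨{I a'}, ?_, ?_, ?_⟩
      · intro q hq
        rw [Set.mem_singleton_iff] at hq
        exact hq ▸ ⟨a', ha'S, rfl⟩
      · rw [Cardinal.mk_singleton]
        exact lt_of_lt_of_le Cardinal.one_lt_two h4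
      · intro x hx
        refine Set.mem_sUnion.mpr ⟨_, Set.mem_singleton _, ?_⟩
        have hxa : r x a := ha x hx
        rcases hmem a' a ha' with h' | h'
        · exact Or.inl (_root_.trans hxa h')
        · exact Or.inl (h' ▸ hxa)
  have hwit : #X ∈ { c | ∃ Y : Set (Set r1.out),
      (∀ x ∈ Y, #x < r1) ∧
      (∀ b : Set r1.out, #b < r3 → ∃ Q : Set (Set r1.out), Q ⊆ Y ∧ #Q < r4 ∧ b ⊆ ⋃₀ Q) ∧
      #Y = c } := ⟨X, hXsmall, hXcov, rfl⟩
  apply le_antisymm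
  · calc cov r1 r1 r3 r4 ≤ #X := csInf_le' hwit
      _ ≤ #S := Cardinal.mk_image_le
      _ = cf r1 := hScard
  · refine le_csInf ⟨#X, hwit⟩ ?_
    rintro c ⟨Y, hYsmall, hYcov, rfl⟩
    by_contra hlt
    push_neg at hlt
    have hcov : ⋃₀ Y = Set.univ := by
      apply Set.eq_univ_of_forall
      intro x
      obtain ⟨Q, hQY, _, hQcov⟩ := hYcov {x} (by
        rw [Cardinal.mk_singleton]
        exact lt_of_lt_of_le Cardinal.one_lt_aleph0 h3)
      obtain ⟨q, hq, hxq⟩ := hQcov (Set.mem_singleton x)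
      exact ⟨q, hQY hq, hxq⟩
    have hge : r1 ≤ #(⋃₀ Y) := by rw [hcov, Cardinal.mk_univ, hmk]
    have hsup : (⨆ s : Y, #(s : Set r1.out)) < r1 :=
      Ordinal.iSup_lt (by exact hlt) (fun s => hYsmall s s.2)
    have hYlt : #Y < r1 := lt_of_lt_of_le hlt (Ordinal.cof_ord_le r1)
    have hlt' : #(⋃₀ Y) < r1 :=
      lt_of_le_of_lt (Cardinal.mk_sUnion_le Y) (Cardinal.mul_lt_of_lt h1 hYlt hsup)
    exact absurd hge (not_le.mpr hlt')
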